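/- Let d ≥ 2, let {𝒫^(b)}_{b=1}^{d+1} be a set of d+1 mutually unbiased measurements on ℂ^d with efficiency parameter κ, let ρ be a density operator on ℂ^d, and let α ≥ 2 be a real number. Then (1/(d+1)) Σ_{b=1}^{d+1} R_α(𝒫^(b)|ρ) ≥ (α/(2(1−α))) · ln((κ+1)/(d+1)). -/

import Mathlib

open Matrix Finset Real
open scoped ComplexOrder

lemma psd_trace_nonneg' {m : Type*} [Fintype m] [DecidableEq m] {A : Matrix m m ℂ}
    (hA : A.PosSemidef) : 0 ≤ A.trace := by
  rw [Matrix.trace]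
  apply Finset.sum_nonneg
  intro i _
  exact hA.diag_nonneg

section
open scoped MatrixOrder
lemma psd_mul_trace_nonneg' {m : Type*} [Fintype m] [DecidableEq m] {A B : Matrix m m ℂ}
    (hA : A.PosSemidef) (hB : B.PosSemidef) : 0 ≤ (A * B).trace := by
  have h1 : A = (CFC.sqrt A) * (CFC.sqrt A) := (CFC.sqrt_mul_sqrt_self A hA.nonneg).symm
  have h2 : (A * B).trace = ((CFC.sqrt A) * B * (CFC.sqrt A)).trace := by
    rw [Matrix.trace_mul_comm ((CFC.sqrt A) * B) (CFC.sqrt A), ← Matrix.mul_assoc]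
    rw [← h1]
  rw [h2]
  have hs : ((CFC.sqrt A) * B * (CFC.sqrt A)ᴴ).PosSemidef := hB.mul_mul_conjTranspose_same (CFC.sqrt A)
  rw [(CFC.sqrt_nonneg A).posSemidef.1.eq] at hs
  exact psd_trace_nonneg' hs
end

lemma trace_sq_le_one' {m : Type*} [Fintype m] [DecidableEq m] {ρ : Matrix m m ℂ}
    (hρ : ρ.PosSemidef) (hρtr : ρ.trace = 1) :
    ∃ r : ℝ, (ρ * ρ).trace = (r : ℂ) ∧ r ≤ 1 := by
  have hH := hρ.1
  set U : Matrix m m ℂ := (hH.eigenvectorUnitary : Matrix m m ℂ) with hU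
  set D : Matrix m m ℂ := Matrix.diagonal (RCLike.ofReal ∘ hH.eigenvalues) with hD
  have hspec : ρ = U * D * star U := hH.spectral_theorem
  have hUU : star U * U = 1 := by
    have := hH.eigenvectorUnitary.2
    rw [Matrix.mem_unitaryGroup_iff'] at this
    exact this
  have htrρ : ρ.trace = D.trace := by
    rw [hspec, Matrix.trace_mul_comm, ← Matrix.mul_assoc, hUU, Matrix.one_mul]
  have hkey : star U * (U * (D * star U)) = D * star U := by
    rw [← Matrix.mul_assoc, hUU, Matrix.one_mul]
  have htrρ2 : (ρ * ρ).trace = (D * D).trace := by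
    rw [hspec]
    have h3 : U * D * star U * (U * D * star U) = U * (D * D) * star U := by
      simp only [Matrix.mul_assoc, hkey]
    rw [h3, Matrix.trace_mul_comm, ← Matrix.mul_assoc, hUU, Matrix.one_mul]
  have hDtr : D.trace = (↑(∑ i, hH.eigenvalues i) : ℂ) := by
    rw [hD, Matrix.trace_diagonal]
    push_cast
    rfl
  have hsum1 : ∑ i, hH.eigenvalues i = 1 := by
    have h2 : ((∑ i, hH.eigenvalues i : ℝ) : ℂ) = 1 := by rw [← hDtr, ← htrρ, hρtr]
    exact_mod_cast h2
  refine ⟨∑ i, (hH.eigenvalues i)^2, ?_, ?_⟩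
  · rw [htrρ2, hD, Matrix.diagonal_mul_diagonal, Matrix.trace_diagonal]
    push_cast
    simp [Function.comp, pow_two]
  · calc ∑ i, (hH.eigenvalues i)^2 ≤ (∑ i, hH.eigenvalues i)^2 :=
        Finset.sum_sq_le_sq_sum_of_nonneg (fun i _ => hρ.eigenvalues_nonneg i)
    _ = 1 := by rw [hsum1]; norm_num

lemma sum_rpow_le' {ι : Type*} [Fintype ι] (x : ι → ℝ) (hx : ∀ n, 0 ≤ x n)
    {t : ℝ} (ht : 1 ≤ t) : ∑ n, x n ^ t ≤ (∑ n, x n) ^ t := by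
  have ht0 : 0 < t := lt_of_lt_of_le one_pos ht
  set X := ∑ n, x n with hX
  have hX0 : 0 ≤ X := Finset.sum_nonneg fun n _ => hx n
  rcases eq_or_lt_of_le hX0 with h0 | hpos
  · have hall : ∀ n, x n = 0 := by
      intro n
      have := Finset.sum_eq_zero_iff_of_nonneg (fun i _ => hx i) |>.mp h0.symm
      exact this n (Finset.mem_univ n)
    simp [hall, Real.zero_rpow (ne_of_gt ht0)]
    exact Real.rpow_nonneg hX0 t
  · have step : ∀ n, x n ^ t ≤ X ^ (t - 1) * x n := by
      intro n
      rcases eq_or_lt_of_le (hx n) with h0 | hn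
      · rw [← h0, Real.zero_rpow (ne_of_gt ht0), mul_zero]
      · have hle : x n ≤ X := Finset.single_le_sum (fun i _ => hx i) (Finset.mem_univ n)
        calc x n ^ t = x n ^ (t - 1) * x n := by
              rw [← Real.rpow_add_one (ne_of_gt hn)]; ring_nf
          _ ≤ X ^ (t - 1) * x n :=
              mul_le_mul_of_nonneg_right
                (Real.rpow_le_rpow (le_of_lt hn) hle (by linarith)) (hx n)
    calc ∑ n, x n ^ t ≤ ∑ n, X ^ (t - 1) * x n := Finset.sum_le_sum fun n _ => step n
      _ = X ^ (t - 1) * X := by rw [← Finset.mul_sum]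
      _ = X ^ t := by rw [← Real.rpow_add_one (ne_of_gt hpos)]; ring_nf

lemma quad_sum' {B N : Type*} [Fintype B] [Fintype N] [DecidableEq B] [DecidableEq N]
    (a : B → N → ℝ) (κ c e : ℝ) (hasum : ∀ b, ∑ n, a b n = 0) :
    ∑ b, ∑ n, ∑ b', ∑ n', a b n * a b' n' *
        (if b = b' then (if n = n' then κ else c) else e)
      = (κ - c) * ∑ b, ∑ n, (a b n)^2 := by
  have key : ∀ b b' : B, (∑ n, ∑ n', a b n * a b' n' *
      (if b = b' then (if n = n' then κ else c) else e))
      = if b = b' then (κ - c) * ∑ n, (a b n)^2 else 0 := by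
    intro b b'
    by_cases hb : b = b'
    · subst hb
      simp only [eq_self_iff_true, if_true]
      have hn : ∀ n, (∑ n', a b n * a b n' * (if n = n' then κ else c))
          = (κ - c) * (a b n)^2 := by
        intro n
        have hsplit : ∀ n', a b n * a b n' * (if n = n' then κ else c)
            = (if n = n' then (κ - c) * (a b n)^2 else 0) + a b n * a b n' * c := by
          intro n'
          split_ifs with h
          · subst h; ring
          · ring
        simp only [hsplit]
        rw [Finset.sum_add_distrib, Finset.sum_ite_eq]
        have h2 : ∑ n', a b n * a b n' * c = (a b n * c) * ∑ n', a b n' := by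
          rw [Finset.mul_sum]
          exact Finset.sum_congr rfl (fun n' _ => by ring)
        simp [h2, hasum b]
      simp only [hn]
      rw [← Finset.mul_sum]
    · simp only [if_neg hb]
      have hn : ∀ n, (∑ n', a b n * a b' n' * e) = (a b n * e) * (∑ n', a b' n') := by
        intro n
        rw [Finset.mul_sum]
        exact Finset.sum_congr rfl (fun n' _ => by ring)
      simp [hn, hasum b']
  calc ∑ b, ∑ n, ∑ b', ∑ n', a b n * a b' n' *
        (if b = b' then (if n = n' then κ else c) else e)
      = ∑ b : B, ∑ b' : B, ∑ n, ∑ n', a b n * a b' n' *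
        (if b = b' then (if n = n' then κ else c) else e) :=
        Finset.sum_congr rfl (fun b _ => Finset.sum_comm)
    _ = ∑ b : B, ∑ b' : B, (if b = b' then (κ - c) * ∑ n, (a b n)^2 else 0) := by
        simp only [key]
    _ = ∑ b : B, (κ - c) * ∑ n, (a b n)^2 := by
        apply Finset.sum_congr rfl
        intro b _
        rw [Finset.sum_ite_eq]
        simp
    _ = (κ - c) * ∑ b, ∑ n, (a b n)^2 := by rw [← Finset.mul_sum]

lemma rpow_eq_sq_rpow' (x : ℝ) (hx : 0 ≤ x) (α : ℝ) : x ^ α = (x^2) ^ (α/2) := by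
  rw [← Real.rpow_natCast x 2, ← Real.rpow_mul hx]
  congr 1
  push_cast
  ring

lemma quad_sum2' {B N : Type*} [Fintype B] [Fintype N] [DecidableEq B] [DecidableEq N]
    (a : B → N → ℝ) (κ c e : ℝ) (hasum : ∀ b, ∑ n, a b n = 0) :
    ∑ b, ∑ n, ∑ b', ∑ n', a b n * (a b' n' *
        (if b' = b then (if n' = n then κ else c) else e))
      = (κ - c) * ∑ b, ∑ n, (a b n)^2 := by
  have key : ∀ b b' : B, (∑ n, ∑ n', a b n * (a b' n' *
      (if b' = b then (if n' = n then κ else c) else e)))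
      = if b' = b then (κ - c) * ∑ n, (a b n)^2 else 0 := by
    intro b b'
    by_cases hb : b' = b
    · subst hb
      simp only [eq_self_iff_true, if_true]
      have hn : ∀ n, (∑ n', a b' n * (a b' n' * (if n' = n then κ else c)))
          = (κ - c) * (a b' n)^2 := by
        intro n
        have hsplit : ∀ n', a b' n * (a b' n' * (if n' = n then κ else c))
            = (if n' = n then (κ - c) * (a b' n)^2 else 0) + a b' n * a b' n' * c := by
          intro n'
          split_ifs with h
          · subst h; ring
          · ring
        simp only [hsplit]
        rw [Finset.sum_add_distrib, Finset.sum_ite_eq']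
        have h2 : ∑ n', a b' n * a b' n' * c = (a b' n * c) * ∑ n', a b' n' := by
          rw [Finset.mul_sum]
          exact Finset.sum_congr rfl (fun n' _ => by ring)
        simp [h2, hasum b']
      simp only [hn]
      rw [← Finset.mul_sum]
    · simp only [if_neg hb]
      have hn : ∀ n, (∑ n', a b n * (a b' n' * e)) = (a b n * e) * (∑ n', a b' n') := by
        intro n
        rw [Finset.mul_sum]
        exact Finset.sum_congr rfl (fun n' _ => by ring)
      simp [hn, hasum b']
  calc ∑ b, ∑ n, ∑ b', ∑ n', a b n * (a b' n' *
        (if b' = b then (if n' = n then κ else c) else e))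
      = ∑ b : B, ∑ b' : B, ∑ n, ∑ n', a b n * (a b' n' *
        (if b' = b then (if n' = n then κ else c) else e)) :=
        Finset.sum_congr rfl (fun b _ => Finset.sum_comm)
    _ = ∑ b : B, ∑ b' : B, (if b' = b then (κ - c) * ∑ n, (a b n)^2 else 0) := by
        simp only [key]
    _ = ∑ b : B, (κ - c) * ∑ n, (a b n)^2 := by
        apply Finset.sum_congr rfl
        intro b _
        rw [Finset.sum_ite_eq']
        simp
    _ = (κ - c) * ∑ b, ∑ n, (a b n)^2 := by rw [← Finset.mul_sum]

theorem stmt10 (d : ℕ) (hd : 2 ≤ d) (κ : ℝ)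
    (hκ1 : 1 / (d : ℝ) < κ) (hκ2 : κ ≤ 1)
    (P : Fin (d + 1) → Fin d → Matrix (Fin d) (Fin d) ℂ)
    (hpsd : ∀ b n, (P b n).PosSemidef)
    (hsum : ∀ b, ∑ n, P b n = 1)
    (htr1 : ∀ b n, (P b n).trace = 1)
    (htr2 : ∀ b b', b ≠ b' → ∀ n n', (P b n * P b' n').trace = ((1 / (d : ℝ) : ℝ) : ℂ))
    (htr3 : ∀ b n n', (P b n * P b n').trace =
      if n = n' then ((κ : ℝ) : ℂ) else (((1 - κ) / ((d : ℝ) - 1) : ℝ) : ℂ))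
    (ρ : Matrix (Fin d) (Fin d) ℂ) (hρ : ρ.PosSemidef) (hρtr : ρ.trace = 1)
    (p : Fin (d + 1) → Fin d → ℝ)
    (hp : ∀ b n, ((p b n : ℝ) : ℂ) = (P b n * ρ).trace)
    (α : ℝ) (hα : 2 ≤ α) :
    (1 / ((d : ℝ) + 1)) * (∑ b, ((1 / (1 - α)) * Real.log (∑ n, (p b n) ^ α))) ≥
      (α / (2 * (1 - α))) * Real.log ((κ + 1) / ((d : ℝ) + 1)) := by
  -- basic numeric facts
  have hd2 : (2:ℝ) ≤ (d:ℝ) := by exact_mod_cast hd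
  have hdpos : (0:ℝ) < d := by linarith
  have hd0 : (d:ℝ) ≠ 0 := ne_of_gt hdpos
  have hd1 : (1:ℝ) < d := by linarith
  have hd1' : (d:ℝ) - 1 ≠ 0 := by intro h; linarith [h]
  have hκd : 1 < κ * d := by
    rw [div_lt_iff₀ hdpos] at hκ1; linarith
  have hκpos : 0 < κ := by nlinarith
  have hα1 : (1:ℝ) < α := by linarith
  have h1α : 1 - α < 0 := by linarith
  -- nonnegativity of probabilities
  have hpnn : ∀ b n, 0 ≤ p b n := by
    intro b n
    have h := psd_mul_trace_nonneg' (hpsd b n) hρ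
    rw [← hp b n] at h
    exact Complex.zero_le_real.mp h
  -- probabilities sum to one
  have hpsum : ∀ b, ∑ n, p b n = 1 := by
    intro b
    have hc : ((∑ n, p b n : ℝ) : ℂ) = 1 := by
      push_cast
      simp_rw [hp b]
      rw [← Matrix.trace_sum]
      rw [← Finset.sum_mul, hsum b, Matrix.one_mul, hρtr]
    exact_mod_cast hc
  -- deviations
  set a : Fin (d+1) → Fin d → ℝ := fun b n => p b n - 1/(d:ℝ) with ha
  have hasum : ∀ b, ∑ n, a b n = 0 := by
    intro b
    rw [ha]
    simp only [Finset.sum_sub_distrib, hpsum b, Finset.sum_const, Finset.card_univ,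
      Fintype.card_fin, nsmul_eq_mul]
    field_simp
    ring
  set S : ℝ := ∑ b, ∑ n, (a b n)^2 with hSdef
  have hS0 : 0 ≤ S := Finset.sum_nonneg fun b _ => Finset.sum_nonneg fun n _ => sq_nonneg _
  -- the matrices w and σ
  set w : Matrix (Fin d) (Fin d) ℂ := ∑ b, ∑ n, ((a b n : ℝ) : ℂ) • P b n with hw
  set σ : Matrix (Fin d) (Fin d) ℂ := ρ - (((d:ℝ) : ℂ))⁻¹ • 1 with hσ
  have hdC : (((d:ℝ)) : ℂ) ≠ 0 := by exact_mod_cast hd0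
  -- trace identities
  have hPσ : ∀ b n, (P b n * σ).trace = ((p b n - 1/(d:ℝ) : ℝ) : ℂ) := by
    intro b n
    rw [hσ, Matrix.mul_sub, Matrix.mul_smul, Matrix.mul_one, Matrix.trace_sub,
      Matrix.trace_smul, ← hp b n, htr1 b n]
    push_cast
    field_simp
    rw [smul_eq_mul, mul_one, mul_sub, mul_one_div_cancel (by exact_mod_cast hd0 : ((d:ℕ):ℂ) ≠ 0)]; ring
  have hwσ : (w * σ).trace = ((S : ℝ) : ℂ) := by
    rw [hw, hSdef]
    simp only [Finset.sum_mul, Matrix.smul_mul, Matrix.trace_sum, Matrix.trace_smul, smul_eq_mul]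
    simp_rw [hPσ]
    push_cast
    apply Finset.sum_congr rfl
    intro b _
    apply Finset.sum_congr rfl
    intro n _
    rw [ha]
    push_cast
    ring
  have hσw : (σ * w).trace = ((S : ℝ) : ℂ) := by
    rw [Matrix.trace_mul_comm]; exact hwσ
  -- trace of w*w
  set lam : ℝ := κ - (1 - κ)/((d:ℝ) - 1) with hlam
  have hlampos : 0 < lam := by
    rw [hlam, sub_pos, div_lt_iff₀ (by linarith : (0:ℝ) < (d:ℝ) - 1)]
    nlinarith
  have hTr : ∀ b n b' n', (P b n * P b' n').trace =
      (((if b = b' then (if n = n' then κ else (1-κ)/((d:ℝ)-1)) else 1/(d:ℝ)) : ℝ) : ℂ) := by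
    intro b n b' n'
    by_cases hb : b = b'
    · subst hb
      rw [htr3 b n n']
      by_cases hn : n = n' <;> simp [hn]
    · rw [htr2 b b' hb n n']
      simp [hb]
  have hww : (w * w).trace = ((lam * S : ℝ) : ℂ) := by
    rw [hw]
    simp only [Finset.sum_mul, Finset.mul_sum, Matrix.smul_mul, Matrix.mul_smul,
      Matrix.trace_sum, Matrix.trace_smul, smul_eq_mul]
    simp_rw [hTr]
    have : ∀ b : Fin (d+1), ∀ n : Fin d, ∀ b' : Fin (d+1), ∀ n' : Fin d,
        ((a b n : ℝ) : ℂ) * (((a b' n' : ℝ) : ℂ) *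
          (((if b = b' then (if n = n' then κ else (1-κ)/((d:ℝ)-1)) else 1/(d:ℝ)) : ℝ) : ℂ))
        = (((a b n * a b' n' * (if b = b' then (if n = n' then κ else (1-κ)/((d:ℝ)-1))
            else 1/(d:ℝ))) : ℝ) : ℂ) := by
      intro b n b' n'
      push_cast
      ring
    have hq := quad_sum2' a κ ((1-κ)/((d:ℝ)-1)) (1/(d:ℝ)) hasum
    rw [show ((lam * S : ℝ):ℂ) =
      ((((κ - (1-κ)/((d:ℝ)-1)) * ∑ b, ∑ n, (a b n)^2 : ℝ)):ℂ) by rw [hlam, hSdef], ← hq]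
    push_cast
    ring
  -- trace of σ*σ
  obtain ⟨r, hr, hr1⟩ := trace_sq_le_one' hρ hρtr
  have hσσ : (σ * σ).trace = ((r - 1/(d:ℝ) : ℝ) : ℂ) := by
    rw [hσ]
    simp only [Matrix.sub_mul, Matrix.mul_sub, Matrix.smul_mul, Matrix.mul_smul,
      Matrix.mul_one, Matrix.one_mul, Matrix.trace_sub, Matrix.trace_smul, smul_eq_mul,
      hρtr, hr, Matrix.trace_one]
    push_cast
    field_simp
    simp
  -- hermiticity
  have hwH : w.IsHermitian := by
    show wᴴ = w
    rw [hw, Matrix.conjTranspose_sum]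
    apply Finset.sum_congr rfl
    intro b _
    rw [Matrix.conjTranspose_sum]
    apply Finset.sum_congr rfl
    intro n _
    rw [Matrix.conjTranspose_smul, (hpsd b n).1.eq]
    congr 1
    simp [Complex.star_def, Complex.conj_ofReal]
  have hσH : σ.IsHermitian := by
    show σᴴ = σ
    rw [hσ, Matrix.conjTranspose_sub, Matrix.conjTranspose_smul, Matrix.conjTranspose_one,
      hρ.1.eq]
    congr 1
    simp [Complex.star_def]
  -- PSD trace inequality with t = lam⁻¹
  set t : ℝ := lam⁻¹ with ht
  set X : Matrix (Fin d) (Fin d) ℂ := ((t : ℝ) : ℂ) • w - σ with hX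
  have hXH : Xᴴ = X := by
    rw [hX, Matrix.conjTranspose_sub, Matrix.conjTranspose_smul, hwH.eq, hσH.eq]
    congr 1
    simp [Complex.star_def, Complex.conj_ofReal]
  have hXpsd : (X * X).PosSemidef := by
    have := Matrix.posSemidef_self_mul_conjTranspose X
    rwa [hXH] at this
  have htrX : 0 ≤ (X * X).trace := psd_trace_nonneg' hXpsd
  have hXtr : (X * X).trace = ((t^2 * (lam * S) - 2 * t * S + (r - 1/(d:ℝ)) : ℝ) : ℂ) := by
    rw [hX]
    simp only [Matrix.sub_mul, Matrix.mul_sub, Matrix.smul_mul, Matrix.mul_smul,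
      Matrix.trace_sub, Matrix.trace_smul, smul_eq_mul, hww, hwσ, hσw, hσσ]
    push_cast
    ring
  rw [hXtr] at htrX
  have hreal : 0 ≤ t^2 * (lam * S) - 2 * t * S + (r - 1/(d:ℝ)) :=
    Complex.zero_le_real.mp htrX
  -- derive S ≤ κ - 1/d
  have hsimp : t^2 * (lam * S) - 2 * t * S = -(S / lam) := by
    rw [ht]
    field_simp
    ring
  rw [hsimp] at hreal
  have hSlam : S / lam ≤ 1 - 1/(d:ℝ) := by linarith
  have hS : S ≤ κ - 1/(d:ℝ) := by
    have h1 : S ≤ lam * (1 - 1/(d:ℝ)) := by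
      have := (div_le_iff₀ hlampos).mp hSlam
      linarith [this]
    have h2 : lam * (1 - 1/(d:ℝ)) = κ - 1/(d:ℝ) := by
      rw [hlam]
      field_simp
      ring
    linarith
  -- collision probability bound
  set C : Fin (d+1) → ℝ := fun b => ∑ n, (p b n)^2 with hC
  have hCsum : ∑ b, C b ≤ κ + 1 := by
    have hCb : ∀ b, C b = (∑ n, (a b n)^2) + 1/(d:ℝ) := by
      intro b
      rw [hC]
      have hterm : ∀ n : Fin d, (p b n)^2 = (a b n)^2 + (2/(d:ℝ)) * p b n - 1/(d:ℝ)^2 := by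
        intro n
        rw [ha]
        field_simp
        ring
      simp only [hterm]
      rw [Finset.sum_sub_distrib, Finset.sum_add_distrib, ← Finset.mul_sum, hpsum b,
        Finset.sum_const, Finset.card_univ, Fintype.card_fin, nsmul_eq_mul]
      field_simp
      ring
    calc ∑ b, C b = ∑ b, ((∑ n, (a b n)^2) + 1/(d:ℝ)) := Finset.sum_congr rfl fun b _ => hCb b
      _ = S + ((d:ℝ)+1) * (1/(d:ℝ)) := by
          rw [Finset.sum_add_distrib, Finset.sum_const, Finset.card_univ, Fintype.card_fin,
            nsmul_eq_mul, ← hSdef]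
          push_cast
          ring
      _ ≤ (κ - 1/(d:ℝ)) + ((d:ℝ)+1) * (1/(d:ℝ)) := by linarith
      _ = κ + 1 := by field_simp; ring
  -- positivity
  have hex : ∀ b, ∃ n, 0 < p b n := by
    intro b
    by_contra hc
    push_neg at hc
    have : ∑ n, p b n ≤ 0 := Finset.sum_nonpos fun n _ => hc n
    rw [hpsum b] at this
    linarith
  have hCpos : ∀ b, 0 < C b := by
    intro b
    obtain ⟨n, hn⟩ := hex b
    exact Finset.sum_pos' (fun i _ => sq_nonneg _) ⟨n, Finset.mem_univ n, by positivity⟩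
  have hppos : ∀ b, 0 < ∑ n, p b n ^ α := by
    intro b
    obtain ⟨n, hn⟩ := hex b
    exact Finset.sum_pos' (fun i _ => Real.rpow_nonneg (hpnn b i) α)
      ⟨n, Finset.mem_univ n, Real.rpow_pos_of_pos hn α⟩
  -- sum of powers bound
  have hle : ∀ b, ∑ n, p b n ^ α ≤ (C b) ^ (α/2) := by
    intro b
    have h2 : (1:ℝ) ≤ α/2 := by linarith
    calc ∑ n, p b n ^ α = ∑ n, ((p b n)^2) ^ (α/2) :=
          Finset.sum_congr rfl fun n _ => rpow_eq_sq_rpow' (p b n) (hpnn b n) α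
      _ ≤ (∑ n, (p b n)^2) ^ (α/2) := sum_rpow_le' _ (fun n => sq_nonneg _) h2
  -- per-measurement entropy bound
  have hRb : ∀ b, (α/(2*(1-α))) * Real.log (C b) ≤
      (1/(1-α)) * Real.log (∑ n, p b n ^ α) := by
    intro b
    have hlog1 : Real.log (∑ n, p b n ^ α) ≤ Real.log ((C b) ^ (α/2)) :=
      Real.log_le_log (hppos b) (hle b)
    rw [Real.log_rpow (hCpos b)] at hlog1
    have hmul : (1/(1-α)) * ((α/2) * Real.log (C b)) ≤
        (1/(1-α)) * Real.log (∑ n, p b n ^ α) := by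
      apply mul_le_mul_of_nonpos_left hlog1
      apply le_of_lt
      apply div_neg_of_pos_of_neg one_pos h1α
    have h1α' : (1:ℝ) - α ≠ 0 := ne_of_lt h1α
    calc (α/(2*(1-α))) * Real.log (C b) = (1/(1-α)) * ((α/2) * Real.log (C b)) := by
          rw [show (1/(1-α)) * ((α/2) * Real.log (C b)) =
            ((1/(1-α)) * (α/2)) * Real.log (C b) by ring,
            div_mul_div_comm, one_mul, mul_comm (1-α) 2]
      _ ≤ (1/(1-α)) * Real.log (∑ n, p b n ^ α) := hmul
  -- Jensen step
  set A : ℝ := (κ + 1) / ((d:ℝ) + 1) with hA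
  have hApos : 0 < A := by
    rw [hA]
    apply div_pos (by linarith) (by linarith)
  have hJ : ∑ b, Real.log (C b) ≤ ((d:ℝ)+1) * Real.log A := by
    calc ∑ b, Real.log (C b) ≤ ∑ b, (Real.log A + (C b / A - 1)) := by
          apply Finset.sum_le_sum
          intro b _
          have h1 := Real.log_le_sub_one_of_pos (div_pos (hCpos b) hApos)
          have h2 : Real.log (C b / A) = Real.log (C b) - Real.log A :=
            Real.log_div (ne_of_gt (hCpos b)) (ne_of_gt hApos)
          linarith
      _ = ((d:ℝ)+1) * (Real.log A - 1) + (∑ b, C b)/A := by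
          rw [Finset.sum_add_distrib, Finset.sum_sub_distrib, ← Finset.sum_div,
            Finset.sum_const, Finset.sum_const, Finset.card_univ, Fintype.card_fin,
            nsmul_eq_mul, nsmul_eq_mul]
          push_cast
          ring
      _ ≤ ((d:ℝ)+1) * (Real.log A - 1) + ((d:ℝ)+1) := by
          have hdiv : (∑ b, C b)/A ≤ (d:ℝ)+1 := by
            rw [div_le_iff₀ hApos, hA]
            have : ((d:ℝ)+1) * ((κ + 1) / ((d:ℝ) + 1)) = κ + 1 := by
              field_simp
            rw [this]
            exact hCsum
          linarith
      _ = ((d:ℝ)+1) * Real.log A := by ring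
  -- final assembly
  rw [ge_iff_le]
  have hβ : α/(2*(1-α)) ≤ 0 := by
    apply le_of_lt
    apply div_neg_of_pos_of_neg (by linarith) (by linarith)
  have h1 : (α/(2*(1-α))) * (((d:ℝ)+1) * Real.log A) ≤
      (α/(2*(1-α))) * ∑ b, Real.log (C b) := mul_le_mul_of_nonpos_left hJ hβ
  have h2 : ∑ b, (α/(2*(1-α))) * Real.log (C b) ≤
      ∑ b, (1/(1-α)) * Real.log (∑ n, p b n ^ α) :=
    Finset.sum_le_sum fun b _ => hRb b
  rw [← Finset.mul_sum] at h2
  have h3 : (α/(2*(1-α))) * (((d:ℝ)+1) * Real.log A) ≤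
      ∑ b, (1/(1-α)) * Real.log (∑ n, p b n ^ α) := le_trans h1 h2
  have h4 : (1/((d:ℝ)+1)) * ((α/(2*(1-α))) * (((d:ℝ)+1) * Real.log A)) ≤
      (1/((d:ℝ)+1)) * ∑ b, (1/(1-α)) * Real.log (∑ n, p b n ^ α) := by
    apply mul_le_mul_of_nonneg_left h3
    positivity
  have hX0 : ((d:ℝ)+1) ≠ 0 := by positivity
  have h5 : (1/((d:ℝ)+1)) * ((α/(2*(1-α))) * (((d:ℝ)+1) * Real.log A)) =
      (α/(2*(1-α))) * Real.log A := by
    rw [show (1/((d:ℝ)+1)) * ((α/(2*(1-α))) * (((d:ℝ)+1) * Real.log A)) =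
      (((d:ℝ)+1)/((d:ℝ)+1)) * ((α/(2*(1-α))) * Real.log A) by ring, div_self hX0, one_mul]
  rw [h5] at h4
  exact h4
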